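/- (Moment condition, necessity) For f : ℝ² → ℝ integrable with compact support and n ∈ ℕ, the function θ ↦ ∫_{-∞}^{∞} P(f)(θ, s) s^n ds is a trigonometric polynomial of degree at most n; more precisely it lies in the span of {e^{ikθ} : |k| ≤ n, k + n even}. -/

import Mathlib

open MeasureTheory Real Complex

/-- Parallel-beam ray transform. -/
noncomputable def rayTransform (f : ℝ × ℝ → ℝ) (θ s : ℝ) : ℝ :=
  ∫ t : ℝ, f (s * Real.cos θ - t * Real.sin θ, s * Real.sin θ + t * Real.cos θ)

section Aux

/-- A compactly supported integrable function times a continuous function is integrable. -/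
lemma integrable_mul_cont {𝕜 : Type*} [RCLike 𝕜] {g : ℝ × ℝ → 𝕜}
    (hg : Integrable g) (hgs : HasCompactSupport g) {φ : ℝ × ℝ → 𝕜} (hφ : Continuous φ) :
    Integrable (fun p => g p * φ p) := by
  obtain ⟨C, hC⟩ := hgs.exists_bound_of_continuousOn hφ.continuousOn
  refine (hg.norm.const_mul (max C 0)).mono'
    (hg.aestronglyMeasurable.mul hφ.aestronglyMeasurable)
    (Filter.Eventually.of_forall fun p => ?_)
  by_cases hp : p ∈ tsupport g
  · calc ‖g p * φ p‖ ≤ ‖g p‖ * ‖φ p‖ := norm_mul_le _ _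
      _ ≤ ‖g p‖ * max C 0 :=
        mul_le_mul_of_nonneg_left ((hC p hp).trans (le_max_left _ _)) (norm_nonneg _)
      _ = max C 0 * ‖g p‖ := mul_comm _ _
  · simp only [image_eq_zero_of_notMem_tsupport hp, zero_mul, norm_zero]
    positivity

/-- The rotation by angle `θ` as a measurable equivalence of `ℝ × ℝ`. -/
noncomputable def rotEquiv (θ : ℝ) : (ℝ × ℝ) ≃ᵐ (ℝ × ℝ) :=
  Complex.measurableEquivRealProd.symm.trans
    (((rotation (Circle.exp θ)).toHomeomorph.toMeasurableEquiv).trans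
      Complex.measurableEquivRealProd)

lemma rotEquiv_apply (θ : ℝ) (p : ℝ × ℝ) :
    rotEquiv θ p = (p.1 * Real.cos θ - p.2 * Real.sin θ,
      p.1 * Real.sin θ + p.2 * Real.cos θ) := by
  simp only [rotEquiv, MeasurableEquiv.trans_apply, Homeomorph.toMeasurableEquiv_coe,
    Complex.measurableEquivRealProd_symm_apply, LinearIsometryEquiv.coe_toHomeomorph,
    rotation_apply, Complex.measurableEquivRealProd_apply]
  simp [Circle.coe_exp, Complex.exp_mul_I, Complex.mul_re, Complex.mul_im,
    Complex.add_re, Complex.add_im, Complex.cos_ofReal_re, Complex.sin_ofReal_re]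
  constructor <;> ring

lemma rotEquiv_measurePreserving (θ : ℝ) : MeasurePreserving (rotEquiv θ) volume volume := by
  have h1 := Complex.volume_preserving_equiv_real_prod
  have h2 := (rotation (Circle.exp θ)).measurePreserving
  have h3 := h1.symm Complex.measurableEquivRealProd
  simp only [rotEquiv, MeasurableEquiv.coe_trans, Homeomorph.toMeasurableEquiv_coe,
    LinearIsometryEquiv.coe_toHomeomorph]
  exact h1.comp (h2.comp h3)

end Aux

section MomentEq

variable (f : ℝ × ℝ → ℝ)

/-- Step 1: the moment equals a double integral of `f` against a polynomial. -/
lemma moment_eq_integral (hf : Integrable f) (hfs : HasCompactSupport f) (n : ℕ) (θ : ℝ) :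
    (∫ s : ℝ, rayTransform f θ s * s ^ n)
      = ∫ p : ℝ × ℝ, f p * (p.1 * Real.cos θ + p.2 * Real.sin θ) ^ n := by
  set c := Real.cos θ
  set s' := Real.sin θ
  set Φ := rotEquiv (-θ) with hΦdef
  have hΦ : MeasurePreserving Φ volume volume := rotEquiv_measurePreserving (-θ)
  have hΦapp : ∀ p : ℝ × ℝ, Φ p = (p.1 * c + p.2 * s', -(p.1 * s') + p.2 * c) := by
    intro p
    rw [hΦdef, rotEquiv_apply]
    simp [Real.cos_neg, Real.sin_neg, c, s']
  set F : ℝ × ℝ → ℝ := fun p => f (p.1 * c - p.2 * s', p.1 * s' + p.2 * c) * p.1 ^ n with hFdef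
  have hkey : ∀ p : ℝ × ℝ, F (Φ p) = f p * (p.1 * c + p.2 * s') ^ n := by
    intro p
    rw [hFdef, hΦapp]
    have hcs : s' ^ 2 + c ^ 2 = 1 := Real.sin_sq_add_cos_sq θ
    have h1 : (p.1 * c + p.2 * s') * c - (-(p.1 * s') + p.2 * c) * s' = p.1 := by
      linear_combination p.1 * hcs
    have h2 : (p.1 * c + p.2 * s') * s' + (-(p.1 * s') + p.2 * c) * c = p.2 := by
      linear_combination p.2 * hcs
    simp only [h1, h2]
  have hnice : Integrable (fun p : ℝ × ℝ => f p * (p.1 * c + p.2 * s') ^ n) :=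
    integrable_mul_cont (𝕜 := ℝ) hf hfs
      (by continuity : Continuous fun p : ℝ × ℝ => (p.1 * c + p.2 * s') ^ n)
  have hFint : Integrable F := by
    refine (hΦ.integrable_comp_emb Φ.measurableEmbedding).mp ?_
    have : F ∘ Φ = fun p => f p * (p.1 * c + p.2 * s') ^ n := funext hkey
    rw [this]
    exact hnice
  calc (∫ s : ℝ, rayTransform f θ s * s ^ n)
      = ∫ s : ℝ, ∫ t : ℝ, f (s * c - t * s', s * s' + t * c) * s ^ n := by
        unfold rayTransform
        simp_rw [← integral_mul_const]
        rfl
    _ = ∫ p : ℝ × ℝ, F p := by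
        rw [show (volume : Measure (ℝ × ℝ)) = (volume : Measure ℝ).prod volume from
          Measure.volume_eq_prod ℝ ℝ]
        exact integral_integral (by
          rw [← Measure.volume_eq_prod ℝ ℝ]
          exact hFint)
    _ = ∫ p : ℝ × ℝ, F (Φ p) := (hΦ.integral_comp Φ.measurableEmbedding F).symm
    _ = ∫ p : ℝ × ℝ, f p * (p.1 * c + p.2 * s') ^ n := by
        exact integral_congr_ae (Filter.Eventually.of_forall fun p => hkey p)

/-- Step 2: the binomial expansion of the angular kernel. -/
lemma kernel_expansion (n : ℕ) (θ : ℝ) (p : ℝ × ℝ) :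
    ((p.1 * Real.cos θ + p.2 * Real.sin θ : ℝ) : ℂ) ^ n
      = ∑ j ∈ Finset.range (n + 1),
          ((n.choose j : ℂ) * (2 : ℂ)⁻¹ ^ n *
            ((p.1 : ℂ) + Complex.I * p.2) ^ j * ((p.1 : ℂ) - Complex.I * p.2) ^ (n - j)) *
            Complex.exp (Complex.I * ((n : ℤ) - 2 * j) * θ) := by
  have e1 : Complex.exp (Complex.I * θ)
      = (Real.cos θ : ℂ) + (Real.sin θ : ℂ) * Complex.I := by
    rw [mul_comm, Complex.exp_mul_I, ← Complex.ofReal_cos, ← Complex.ofReal_sin]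
  have e2 : Complex.exp (-(Complex.I * θ))
      = (Real.cos θ : ℂ) - (Real.sin θ : ℂ) * Complex.I := by
    rw [show -(Complex.I * (θ : ℂ)) = ((-θ : ℝ) : ℂ) * Complex.I by push_cast; ring,
      Complex.exp_mul_I, ← Complex.ofReal_cos, ← Complex.ofReal_sin, Real.cos_neg, Real.sin_neg]
    push_cast
    ring
  have hbase : ((p.1 * Real.cos θ + p.2 * Real.sin θ : ℝ) : ℂ)
      = (2 : ℂ)⁻¹ * ((((p.1 : ℂ) + Complex.I * p.2) * Complex.exp (-(Complex.I * θ)))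
        + (((p.1 : ℂ) - Complex.I * p.2) * Complex.exp (Complex.I * θ))) := by
    rw [e1, e2]
    push_cast
    linear_combination (p.2 : ℂ) * Complex.sin (θ : ℂ) * Complex.I_sq
  rw [hbase, mul_pow, add_pow]
  rw [Finset.mul_sum]
  refine Finset.sum_congr rfl fun j hj => ?_
  have hj' : j ≤ n := Nat.lt_succ_iff.mp (Finset.mem_range.mp hj)
  rw [mul_pow, mul_pow, ← Complex.exp_nat_mul, ← Complex.exp_nat_mul]
  have hsplit : Complex.exp (Complex.I * ((n : ℤ) - 2 * j) * θ)
      = Complex.exp (((n - j : ℕ) : ℂ) * (Complex.I * θ)) *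
        Complex.exp ((j : ℂ) * -(Complex.I * θ)) := by
    rw [← Complex.exp_add]
    congr 1
    push_cast [Nat.cast_sub hj']
    ring
  rw [hsplit]
  ring

end MomentEq

theorem moment_condition
    (f : ℝ × ℝ → ℝ) (hf : Integrable f) (hfs : HasCompactSupport f) (n : ℕ) :
    ∃ c : ℤ → ℂ,
      (∀ k : ℤ, ¬(|k| ≤ (n : ℤ) ∧ Even (k + n)) → c k = 0) ∧
      ∀ θ : ℝ,
        ((∫ s : ℝ, rayTransform f θ s * s ^ n : ℝ) : ℂ)
          = ∑ k ∈ Finset.Icc (-(n : ℤ)) (n : ℤ),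
              c k * Complex.exp (Complex.I * k * θ) := by
  classical
  -- coefficients
  set a : ℕ → ℂ := fun j =>
    (n.choose j : ℂ) * (2 : ℂ)⁻¹ ^ n *
      ∫ p : ℝ × ℝ, (f p : ℂ) * (((p.1 : ℂ) + Complex.I * p.2) ^ j *
        ((p.1 : ℂ) - Complex.I * p.2) ^ (n - j)) with ha
  set c : ℤ → ℂ := fun k =>
    ∑ j ∈ (Finset.range (n + 1)).filter (fun j : ℕ => (n : ℤ) - 2 * (j : ℤ) = k), a j with hc
  refine ⟨c, ?_, ?_⟩
  · intro k hk
    rw [hc]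
    apply Finset.sum_eq_zero
    intro j hj
    simp only [Finset.mem_filter, Finset.mem_range, Nat.lt_succ_iff] at hj
    exfalso
    apply hk
    obtain ⟨hjn, hjk⟩ := hj
    subst hjk
    constructor
    · rw [abs_le]
      constructor <;> omega
    · refine ⟨(n : ℤ) - j, ?_⟩
      omega
  · intro θ
    -- complexified integrable function
    have hfC : Integrable (fun p : ℝ × ℝ => (f p : ℂ)) := hf.ofReal
    have hfsC : HasCompactSupport (fun p : ℝ × ℝ => (f p : ℂ)) := by
      apply hfs.comp_left (g := fun x : ℝ => (x : ℂ))
      simp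
    have hterm : ∀ j : ℕ, Integrable (fun p : ℝ × ℝ =>
        (f p : ℂ) * (((p.1 : ℂ) + Complex.I * p.2) ^ j *
          ((p.1 : ℂ) - Complex.I * p.2) ^ (n - j))) := by
      intro j
      exact integrable_mul_cont (𝕜 := ℂ) hfC hfsC (by continuity)
    have step1 := moment_eq_integral f hf hfs n θ
    rw [step1]
    have hcast : ((∫ p : ℝ × ℝ, f p * (p.1 * Real.cos θ + p.2 * Real.sin θ) ^ n : ℝ) : ℂ)
        = ∫ p : ℝ × ℝ, ((f p * (p.1 * Real.cos θ + p.2 * Real.sin θ) ^ n : ℝ) : ℂ) :=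
      (integral_ofReal (𝕜 := ℂ)).symm
    rw [hcast]
    have step2 : (∫ p : ℝ × ℝ, ((f p * (p.1 * Real.cos θ + p.2 * Real.sin θ) ^ n : ℝ) : ℂ))
        = ∑ j ∈ Finset.range (n + 1), a j * Complex.exp (Complex.I * ((n : ℤ) - 2 * j) * θ) := by
      have : ∀ p : ℝ × ℝ, ((f p * (p.1 * Real.cos θ + p.2 * Real.sin θ) ^ n : ℝ) : ℂ)
          = ∑ j ∈ Finset.range (n + 1),
              ((f p : ℂ) * (((p.1 : ℂ) + Complex.I * p.2) ^ j *
                ((p.1 : ℂ) - Complex.I * p.2) ^ (n - j))) *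
              ((n.choose j : ℂ) * (2 : ℂ)⁻¹ ^ n * Complex.exp (Complex.I * ((n : ℤ) - 2 * j) * θ)) := by
        intro p
        rw [Complex.ofReal_mul, Complex.ofReal_pow, kernel_expansion n θ p, Finset.mul_sum]
        refine Finset.sum_congr rfl fun j _ => ?_
        ring
      rw [integral_congr_ae (Filter.Eventually.of_forall this)]
      rw [integral_finset_sum _ (fun j _ => (hterm j).mul_const _)]
      refine Finset.sum_congr rfl fun j _ => ?_
      rw [integral_mul_const, ha]
      ring
    rw [step2]
    -- reindex the sum
    have hmaps : ∀ j ∈ Finset.range (n + 1),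
        ((n : ℤ) - 2 * j) ∈ Finset.Icc (-(n : ℤ)) (n : ℤ) := by
      intro j hj
      simp only [Finset.mem_range, Nat.lt_succ_iff] at hj
      rw [Finset.mem_Icc]
      omega
    rw [← Finset.sum_fiberwise_of_maps_to hmaps
      (fun j => a j * Complex.exp (Complex.I * ((n : ℤ) - 2 * j) * θ))]
    refine Finset.sum_congr rfl fun k _ => ?_
    rw [hc, Finset.sum_mul]
    refine Finset.sum_congr rfl fun j hj => ?_
    simp only [Finset.mem_filter] at hj
    rw [← hj.2]
    push_cast
    ring
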